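/- Let G = (V,E) be a finite connected simple graph with at least one edge. For V_H ⊆ V with |V_H| ≥ 2 and H = G[V_H] connected with at least one edge, define θ(H) = |E_H|/(|V_H| − 1). Suppose H = G[V_H] is such an induced connected subgraph maximizing θ over all induced connected subgraphs of G with at least one edge. Then H is a homogeneous core of G: H is homogeneous (there exists a pmf on Γ_H with constant edge usage probability) and every fair spanning tree γ of G satisfies γ ∩ E_H ∈ Γ_H. -/

import Mathlib

noncomputable section
open scoped Classical
open Finset

variable {V : Type*} [Fintype V] [DecidableEq V]
set_option linter.unusedSectionVars false

/-- A pmf on a finite family `Γ` of edge sets. -/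
def IsPmf (Γ : Finset (Finset (Sym2 V))) (μ : Finset (Sym2 V) → ℝ) : Prop :=
  (∀ γ, 0 ≤ μ γ) ∧ (∀ γ, γ ∉ Γ → μ γ = 0) ∧ ∑ γ ∈ Γ, μ γ = 1

/-- Edge usage probability. -/
def eta (Γ : Finset (Finset (Sym2 V))) (μ : Finset (Sym2 V) → ℝ) (e : Sym2 V) : ℝ :=
  ∑ γ ∈ Γ.filter (fun γ => e ∈ γ), μ γ

/-- Expected overlap. -/
def EO (Γ : Finset (Finset (Sym2 V))) (μ : Finset (Sym2 V) → ℝ) : ℝ :=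
  ∑ γ ∈ Γ, ∑ γ' ∈ Γ, ((γ ∩ γ').card : ℝ) * μ γ * μ γ'

/-- Minimum expected overlap. -/
def MEO (Γ : Finset (Finset (Sym2 V))) : ℝ :=
  sInf {x : ℝ | ∃ μ, IsPmf Γ μ ∧ x = EO Γ μ}

/-- The set of spanning trees of `G`, as finsets of edges. -/
def spanningTrees (G : SimpleGraph V) : Finset (Finset (Sym2 V)) :=
  Finset.univ.filter (fun γ => ↑γ ⊆ G.edgeSet ∧
    (SimpleGraph.fromEdgeSet (↑γ : Set (Sym2 V))).Connected ∧
    γ.card = Fintype.card V - 1)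

/-- Edges of `G` with both endpoints in `W`. -/
def edgesWithin (G : SimpleGraph V) (W : Finset V) : Finset (Sym2 V) :=
  G.edgeFinset.filter (fun e => ∀ v ∈ e, v ∈ W)

/-- `γ` is a spanning tree of the subgraph of `G` induced by the vertex set `W`. -/
def IsSpanningTreeOn (G : SimpleGraph V) (W : Finset V) (γ : Finset (Sym2 V)) : Prop :=
  γ ⊆ edgesWithin G W ∧
    ((SimpleGraph.fromEdgeSet (↑γ : Set (Sym2 V))).induce (↑W : Set V)).Connected ∧
    γ.card = W.card - 1

def spanningTreesOn (G : SimpleGraph V) (W : Finset V) : Finset (Finset (Sym2 V)) :=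
  Finset.univ.filter (IsSpanningTreeOn G W)

def Adm (Γ : Finset (Finset (Sym2 V))) (ρ : Sym2 V → ℝ) : Prop :=
  (∀ e, 0 ≤ ρ e) ∧ ∀ γ ∈ Γ, 1 ≤ ∑ e ∈ γ, ρ e

def Mod2 (Eset : Finset (Sym2 V)) (Γ : Finset (Finset (Sym2 V))) : ℝ :=
  sInf {x : ℝ | ∃ ρ, Adm Γ ρ ∧ x = ∑ e ∈ Eset, (ρ e) ^ 2}

/-- A fair spanning tree. -/
def IsFair (G : SimpleGraph V) (γ : Finset (Sym2 V)) : Prop :=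
  ∃ μ, IsPmf (spanningTrees G) μ ∧ EO (spanningTrees G) μ = MEO (spanningTrees G) ∧ 0 < μ γ

def IsFeasiblePartition (G : SimpleGraph V) (P : Finset (Finset V)) : Prop :=
  2 ≤ P.card ∧ (∀ p ∈ P, p.Nonempty) ∧ (∀ v : V, ∃! p, p ∈ P ∧ v ∈ p) ∧
    ∀ p ∈ P, (G.induce (↑p : Set V)).Connected

/-- The edges of `G` joining distinct parts of the partition `P`. -/
def cutEdges (G : SimpleGraph V) (P : Finset (Finset V)) : Finset (Sym2 V) :=
  G.edgeFinset.filter (fun e => ¬ ∃ p ∈ P, ∀ v ∈ e, v ∈ p)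

/-- `G` is homogeneous. -/
def IsHomogeneous (G : SimpleGraph V) : Prop :=
  ∃ μ, IsPmf (spanningTrees G) μ ∧
    ∃ c : ℝ, ∀ e ∈ G.edgeFinset, eta (spanningTrees G) μ e = c

namespace MyCore

/-- Abbreviation: graph from a finite edge set. -/
abbrev fes (s : Finset (Sym2 V)) : SimpleGraph V :=
  SimpleGraph.fromEdgeSet (↑s : Set (Sym2 V))

lemma fes_adj (s : Finset (Sym2 V)) (a b : V) :
    (fes s).Adj a b ↔ s(a, b) ∈ s ∧ a ≠ b := by
  simp [fes, SimpleGraph.fromEdgeSet_adj]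

lemma fes_mono {s t : Finset (Sym2 V)} (h : s ⊆ t) : fes s ≤ fes t := by
  apply SimpleGraph.fromEdgeSet_mono
  exact_mod_cast h

lemma edgeSet_fes {s : Finset (Sym2 V)} (hnd : ∀ e ∈ s, ¬e.IsDiag) :
    (fes s).edgeSet = ↑s := by
  rw [fes, SimpleGraph.edgeSet_fromEdgeSet]
  ext e
  simp only [Set.mem_diff, Set.mem_setOf_eq, Finset.mem_coe]
  exact ⟨fun h => h.1, fun h => ⟨h, hnd e h⟩⟩

lemma fes_sdiff_single (s : Finset (Sym2 V)) (e : Sym2 V) :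
    fes s \ SimpleGraph.fromEdgeSet {e} = fes (s.erase e) := by
  ext a b
  simp only [SimpleGraph.sdiff_adj, fes_adj, SimpleGraph.fromEdgeSet_adj,
    Set.mem_singleton_iff, Finset.mem_coe, Finset.mem_erase]
  tauto

lemma reach_trunc {s : Finset (Sym2 V)} {a b : V} {e : Sym2 V} (he : e = s(a, b)) :
    ∀ {x y : V}, (fes s).Walk x y →
      (fes (s.erase e)).Reachable x y ∨
      (fes (s.erase e)).Reachable x a ∨
      (fes (s.erase e)).Reachable x b := by
  intro x y p
  induction p with
  | nil => exact Or.inl (SimpleGraph.Reachable.refl _)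
  | @cons u w y h q ih =>
    by_cases hcase : s(u, w) = e
    · rw [he] at hcase
      rcases Sym2.eq_iff.mp hcase with ⟨rfl, rfl⟩ | ⟨rfl, rfl⟩
      · exact Or.inr (Or.inl (SimpleGraph.Reachable.refl _))
      · exact Or.inr (Or.inr (SimpleGraph.Reachable.refl _))
    · have h' := (fes_adj s u w).mp h
      have hadj : (fes (s.erase e)).Adj u w := by
        rw [fes_adj]
        exact ⟨Finset.mem_erase.mpr ⟨hcase, h'.1⟩, h'.2⟩
      have hr : (fes (s.erase e)).Reachable u w := hadj.reachable
      rcases ih with h1 | h1 | h1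
      · exact Or.inl (hr.trans h1)
      · exact Or.inr (Or.inl (hr.trans h1))
      · exact Or.inr (Or.inr (hr.trans h1))

/-- every vertex reaches `a` or `b` after deleting the edge `s(a,b)` from a connected graph. -/
lemma reach_endpoint {s : Finset (Sym2 V)} (hc : (fes s).Connected) {a b : V} {e : Sym2 V}
    (he : e = s(a, b)) (x : V) :
    (fes (s.erase e)).Reachable x a ∨ (fes (s.erase e)).Reachable x b := by
  obtain ⟨p⟩ := hc.preconnected x a
  rcases reach_trunc he p with h | h | h
  · exact Or.inl h
  · exact Or.inl h
  · exact Or.inr h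

/-- If after deleting `e = s(a,b)` the endpoints are still reachable, the graph stays connected. -/
lemma connected_erase_of_reach {s : Finset (Sym2 V)} (hc : (fes s).Connected) {a b : V}
    {e : Sym2 V} (he : e = s(a, b))
    (hab : (fes (s.erase e)).Reachable a b) : (fes (s.erase e)).Connected := by
  have hne : Nonempty V := hc.nonempty
  rw [SimpleGraph.connected_iff]
  refine ⟨fun x y => ?_, hne⟩
  have hx := reach_endpoint hc he x
  have hy := reach_endpoint hc he y
  have hxa : (fes (s.erase e)).Reachable x a := by
    rcases hx with h | h
    · exact h
    · exact h.trans hab.symm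
  have hya : (fes (s.erase e)).Reachable y a := by
    rcases hy with h | h
    · exact h
    · exact h.trans hab.symm
  exact hxa.trans hya.symm

lemma mem_spanningTrees_iff (G : SimpleGraph V) (γ : Finset (Sym2 V)) :
    γ ∈ spanningTrees G ↔ ↑γ ⊆ G.edgeSet ∧ (fes γ).Connected ∧
      γ.card = Fintype.card V - 1 := by
  simp [spanningTrees]

/-- every connected spanning edge set contains a spanning tree. -/
lemma exists_spanningTree_subset (G : SimpleGraph V) {s : Finset (Sym2 V)}
    (hsub : ↑s ⊆ G.edgeSet) (hc : (fes s).Connected) :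
    ∃ t ⊆ s, t ∈ spanningTrees G := by
  classical
  have hC : s ∈ s.powerset.filter (fun t => (fes t).Connected) := by
    simp [Finset.mem_powerset, hc]
  obtain ⟨t, htmem, htmin⟩ := Finset.exists_min_image
    (s.powerset.filter (fun t => (fes t).Connected)) Finset.card ⟨s, hC⟩
  rw [Finset.mem_filter, Finset.mem_powerset] at htmem
  obtain ⟨hts, htc⟩ := htmem
  have htsub : ↑t ⊆ G.edgeSet := fun e hee => hsub (Finset.coe_subset.mpr hts hee)
  have hnd : ∀ e ∈ t, ¬e.IsDiag := fun e hee => G.not_isDiag_of_mem_edgeSet (htsub hee)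
  -- every edge of `t` is a bridge of `fes t`
  have hbridge : ∀ e ∈ (fes t).edgeSet, (fes t).IsBridge e := by
    intro e hee
    rw [edgeSet_fes hnd] at hee
    induction e with
    | h a b =>
      have hadj : (fes t).Adj a b := by
        rw [fes_adj]
        exact ⟨hee, fun h => hnd _ hee (by simp [h])⟩
      rw [SimpleGraph.isBridge_iff]
      refine fun hr => ?_
      rw [SimpleGraph.deleteEdges, fes_sdiff_single] at hr
      have hconn' := connected_erase_of_reach htc rfl hr
      have hmem' : t.erase s(a, b) ∈ s.powerset.filter (fun u => (fes u).Connected) := by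
        rw [Finset.mem_filter, Finset.mem_powerset]
        exact ⟨(Finset.erase_subset _ _).trans hts, hconn'⟩
      have := htmin _ hmem'
      have hlt := Finset.card_erase_lt_of_mem hee
      omega
  have hacyc : (fes t).IsAcyclic :=
    SimpleGraph.isAcyclic_iff_forall_edge_isBridge.mpr hbridge
  have htree : (fes t).IsTree := ⟨htc, hacyc⟩
  have hcard := htree.card_edgeFinset
  have hef : (fes t).edgeFinset = t := by
    apply Finset.coe_injective
    rw [SimpleGraph.coe_edgeFinset, edgeSet_fes hnd]
  rw [hef] at hcard
  refine ⟨t, hts, (mem_spanningTrees_iff G t).mpr ⟨htsub, htc, by omega⟩⟩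

/-- connected graphs on `V` need at least `card V - 1` edges. -/
lemma card_le_of_connected (G : SimpleGraph V) {s : Finset (Sym2 V)}
    (hsub : ↑s ⊆ G.edgeSet) (hc : (fes s).Connected) :
    Fintype.card V - 1 ≤ s.card := by
  obtain ⟨t, hts, htt⟩ := exists_spanningTree_subset G hsub hc
  rw [mem_spanningTrees_iff] at htt
  calc Fintype.card V - 1 = t.card := htt.2.2.symm
    _ ≤ s.card := Finset.card_le_card hts

/-- a spanning tree is a tree. -/
lemma isTree_of_mem_spanningTrees {G : SimpleGraph V} {γ : Finset (Sym2 V)}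
    (h : γ ∈ spanningTrees G) : (fes γ).IsTree := by
  rw [mem_spanningTrees_iff] at h
  obtain ⟨hsub, hc, hcard⟩ := h
  have hnd : ∀ e ∈ γ, ¬e.IsDiag := fun e hee => G.not_isDiag_of_mem_edgeSet (hsub hee)
  refine ⟨hc, ?_⟩
  rw [SimpleGraph.isAcyclic_iff_forall_edge_isBridge]
  intro e hee
  rw [edgeSet_fes hnd] at hee
  induction e with
  | h a b =>
    have hadj : (fes γ).Adj a b := by
      rw [fes_adj]
      exact ⟨hee, fun h => hnd _ hee (by simp [h])⟩
    rw [SimpleGraph.isBridge_iff]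
    refine fun hr => ?_
    rw [SimpleGraph.deleteEdges, fes_sdiff_single] at hr
    have hconn' := connected_erase_of_reach hc rfl hr
    have hsub' : ↑(γ.erase s(a, b)) ⊆ G.edgeSet :=
      fun e hee => hsub ((Finset.coe_subset.mpr (Finset.erase_subset _ _)) hee)
    have hle := card_le_of_connected G hsub' hconn'
    have hlt := Finset.card_erase_lt_of_mem hee
    have hpos : 1 ≤ Fintype.card V := Fintype.card_pos_iff.mpr hc.nonempty
    omega

/-- bridge fact for spanning trees: deleting an edge disconnects its endpoints. -/
lemma not_reach_erase {G : SimpleGraph V} {γ : Finset (Sym2 V)}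
    (h : γ ∈ spanningTrees G) {a b : V} {e : Sym2 V} (he : e = s(a, b)) (hee : e ∈ γ) :
    ¬ (fes (γ.erase e)).Reachable a b := by
  have htree := isTree_of_mem_spanningTrees h
  rw [mem_spanningTrees_iff] at h
  have hnd : ∀ e ∈ γ, ¬e.IsDiag := fun e hee => G.not_isDiag_of_mem_edgeSet (h.1 hee)
  have hbr := SimpleGraph.isAcyclic_iff_forall_edge_isBridge.mp htree.IsAcyclic
    (e := e) (by rw [edgeSet_fes hnd]; exact_mod_cast hee)
  subst he
  rw [SimpleGraph.isBridge_iff] at hbr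
  intro hr
  exact hbr (by rwa [SimpleGraph.deleteEdges, fes_sdiff_single])

end MyCore

namespace Chunk3

open MyCore

/-- crossing lemma: a walk from inside `P` to outside `P` uses a crossing edge. -/
lemma exists_cross {Gr : SimpleGraph V} {x y : V} (p : Gr.Walk x y) (P : V → Prop)
    (hx : P x) (hy : ¬ P y) :
    ∃ w z, Gr.Adj w z ∧ s(w, z) ∈ p.edges ∧ P w ∧ ¬ P z := by
  induction p with
  | nil => exact absurd hx hy
  | @cons a c y h q ih =>
    by_cases hc : P c
    · obtain ⟨w, z, h1, h2, h3, h4⟩ := ih hc hy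
      exact ⟨w, z, h1, by simp [SimpleGraph.Walk.edges_cons, h2], h3, h4⟩
    · exact ⟨a, c, h, by simp [SimpleGraph.Walk.edges_cons], hx, hc⟩

/-- the swap lemma: exchanging a tree edge for a crossing edge yields a spanning tree. -/
lemma swap_mem_spanningTrees {G : SimpleGraph V} {γ : Finset (Sym2 V)}
    (hγ : γ ∈ spanningTrees G) {a b u v : V} (he : s(a, b) ∈ γ)
    (hf : s(u, v) ∈ G.edgeSet)
    (hru : (fes (γ.erase s(a, b))).Reachable a u)
    (hrv : ¬ (fes (γ.erase s(a, b))).Reachable a v) :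
    insert s(u, v) (γ.erase s(a, b)) ∈ spanningTrees G := by
  have hmem := (mem_spanningTrees_iff G γ).mp hγ
  obtain ⟨hsub, hc, hcard⟩ := hmem
  have huv : u ≠ v := (G.mem_edgeSet.mp hf).ne
  have hfnotin : s(u, v) ∉ γ.erase s(a, b) := by
    intro hmem'
    have : (fes (γ.erase s(a, b))).Adj u v := by
      rw [fes_adj]; exact ⟨hmem', huv⟩
    exact hrv (hru.trans this.reachable)
  have hvb : (fes (γ.erase s(a, b))).Reachable v b := by
    rcases reach_endpoint hc rfl v with h | h
    · exact absurd h.symm hrv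
    · exact h
  have hba : ¬ (fes (γ.erase s(a, b))).Reachable a b := not_reach_erase hγ rfl he
  refine (mem_spanningTrees_iff G _).mpr ⟨?_, ?_, ?_⟩
  · intro e hee
    simp only [Finset.coe_insert, Set.mem_insert_iff] at hee
    rcases hee with rfl | hee
    · exact hf
    · exact hsub (Finset.coe_subset.mpr (Finset.erase_subset _ _) hee)
  · have hmono : fes (γ.erase s(a, b)) ≤ fes (insert s(u, v) (γ.erase s(a, b))) :=
      fes_mono (Finset.subset_insert _ _)
    have hadjuv : (fes (insert s(u, v) (γ.erase s(a, b)))).Adj u v := by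
      rw [fes_adj]; exact ⟨Finset.mem_insert_self _ _, huv⟩
    rw [SimpleGraph.connected_iff]
    refine ⟨fun x y => ?_, hc.nonempty⟩
    have key : ∀ z : V, (fes (insert s(u, v) (γ.erase s(a, b)))).Reachable z a := by
      intro z
      rcases reach_endpoint hc rfl z with h | h
      · exact h.mono hmono
      · have h1 : (fes (insert s(u, v) (γ.erase s(a, b)))).Reachable b v :=
          (hvb.symm).mono hmono
        have h2 : (fes (insert s(u, v) (γ.erase s(a, b)))).Reachable u a :=
          (hru.symm).mono hmono
        exact (h.mono hmono).trans (h1.trans (hadjuv.symm.reachable.trans h2))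
    exact (key x).trans (key y).symm
  · have h1 : (γ.erase s(a, b)).card = γ.card - 1 := Finset.card_erase_of_mem he
    have h2 : (insert s(u, v) (γ.erase s(a, b))).card = (γ.erase s(a, b)).card + 1 :=
      Finset.card_insert_of_notMem hfnotin
    have hpos : 0 < γ.card := Finset.card_pos.mpr ⟨_, he⟩
    omega

/-- in a path, an edge containing the first vertex is the first edge. -/
lemma firstEdge {Gr : SimpleGraph V} {x y : V} (p : Gr.Walk x y) (hp : p.IsPath)
    {e : Sym2 V} (he : e ∈ p.edges) (hx : x ∈ e) : p.edges.head? = some e := by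
  cases p with
  | nil => simp at he
  | @cons _ u _ h q =>
    rw [SimpleGraph.Walk.edges_cons] at he ⊢
    rcases List.mem_cons.mp he with rfl | hq
    · rfl
    · exfalso
      have hxs : x ∈ q.support := by
        induction e with
        | h c d =>
          rcases Sym2.mem_iff.mp hx with rfl | rfl
          · exact SimpleGraph.Walk.fst_mem_support_of_mem_edges q hq
          · exact SimpleGraph.Walk.snd_mem_support_of_mem_edges q hq
      rw [SimpleGraph.Walk.cons_isPath_iff] at hp
      exact hp.2 hxs

/-- in a path ending at `v`, an edge containing `v` is the last edge, giving a
concat decomposition. -/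
lemma lastEdge {Gr : SimpleGraph V} {r v : V} (p : Gr.Walk r v) (hp : p.IsPath)
    {e : Sym2 V} (he : e ∈ p.edges) (hv : v ∈ e) :
    ∃ (u : V) (h : Gr.Adj u v) (q : Gr.Walk r u),
      p = q.concat h ∧ e = s(u, v) ∧ q.length + 1 = p.length := by
  have hrev : e ∈ p.reverse.edges := by
    rw [SimpleGraph.Walk.edges_reverse]
    simpa using he
  have h1 := firstEdge p.reverse hp.reverse hrev hv
  cases hq : p.reverse with
  | nil => rw [hq] at hrev; simp at hrev
  | @cons _ u _ h q =>
    rw [hq] at h1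
    rw [SimpleGraph.Walk.edges_cons] at h1
    simp only [List.head?_cons, Option.some.injEq] at h1
    refine ⟨u, h.symm, q.reverse, ?_, by rw [← h1, Sym2.eq_swap], ?_⟩
    · have := congrArg (fun (w : Gr.Walk v r) => w.reverse) hq
      simp only [SimpleGraph.Walk.reverse_reverse, SimpleGraph.Walk.reverse_cons] at this
      exact this
    · have := congrArg (fun (w : Gr.Walk v r) => w.length) hq
      rw [SimpleGraph.Walk.length_reverse, SimpleGraph.Walk.length_cons] at this
      rw [SimpleGraph.Walk.length_reverse]
      omega

lemma sym2_exists_pair (e : Sym2 V) : ∃ p : V × V, e = s(p.1, p.2) := by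
  induction e with
  | h a b => exact ⟨(a, b), rfl⟩

/-- a chosen pair of endpoints for an edge. -/
def ep (e : Sym2 V) : V × V := Classical.choose (sym2_exists_pair e)

lemma ep_spec (e : Sym2 V) : e = s((ep e).1, (ep e).2) :=
  Classical.choose_spec (sym2_exists_pair e)

/-- the endpoint of tree-edge `e` on the far side from the root `r`. -/
def phi (γ : Finset (Sym2 V)) (r : V) (e : Sym2 V) : V :=
  if (fes (γ.erase e)).Reachable r (ep e).1 then (ep e).2 else (ep e).1

lemma mem_of_eq_pair {a b : V} {e : Sym2 V} (h : e = s(a, b)) : a ∈ e ∧ b ∈ e := by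
  subst h
  constructor <;> simp

lemma phi_mem (γ : Finset (Sym2 V)) (r : V) (e : Sym2 V) : phi γ r e ∈ e := by
  have h := mem_of_eq_pair (ep_spec e)
  rw [phi]
  split
  · exact h.2
  · exact h.1

lemma phi_not_reach {G : SimpleGraph V} {γ : Finset (Sym2 V)} (hγ : γ ∈ spanningTrees G)
    {e : Sym2 V} (he : e ∈ γ) (r : V) :
    ¬ (fes (γ.erase e)).Reachable r (phi γ r e) := by
  have hbr : ¬ (fes (γ.erase e)).Reachable (ep e).1 (ep e).2 :=
    not_reach_erase hγ (ep_spec e) he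
  simp only [phi]
  split_ifs with hcond
  · intro hr
    exact hbr (hcond.symm.trans hr)
  · exact hcond

lemma phi_other_reach {G : SimpleGraph V} {γ : Finset (Sym2 V)} (hγ : γ ∈ spanningTrees G)
    {e : Sym2 V} (he : e ∈ γ) (r : V) {x : V} (hx : x ∈ e) (hne : x ≠ phi γ r e) :
    (fes (γ.erase e)).Reachable r x := by
  have hc := ((mem_spanningTrees_iff G γ).mp hγ).2.1
  have hcases : x = (ep e).1 ∨ x = (ep e).2 := by
    have := hx
    rw [ep_spec e] at this
    exact Sym2.mem_iff.mp this
  simp only [phi] at hne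
  by_cases hcond : (fes (γ.erase e)).Reachable r (ep e).1
  · rw [if_pos hcond] at hne
    rcases hcases with rfl | rfl
    · exact hcond
    · exact absurd rfl hne
  · rw [if_neg hcond] at hne
    rcases hcases with rfl | rfl
    · exact absurd rfl hne
    · rcases reach_endpoint hc (ep_spec e) r with h | h
      · exact absurd h hcond
      · exact h

lemma phi_det {G : SimpleGraph V} {γ : Finset (Sym2 V)} (hγ : γ ∈ spanningTrees G)
    {e : Sym2 V} (he : e ∈ γ) (r : V) {x : V} (hx : x ∈ e)
    (h : ¬ (fes (γ.erase e)).Reachable r x) : phi γ r e = x := by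
  by_contra hne
  exact h (phi_other_reach hγ he r hx (fun h' => hne h'.symm))

/-- any walk in the tree from `r` to a vertex on the far side of `e` must use `e`. -/
lemma mem_edges_of_cut {G : SimpleGraph V} {γ : Finset (Sym2 V)} (hγ : γ ∈ spanningTrees G)
    {e : Sym2 V} (he : e ∈ γ) {r v : V}
    (hv : ¬ (fes (γ.erase e)).Reachable r v) (p : (fes γ).Walk r v) : e ∈ p.edges := by
  obtain ⟨w, z, h1, h2, h3, h4⟩ := exists_cross p ((fes (γ.erase e)).Reachable r)
    (SimpleGraph.Reachable.refl r) hv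
  have hwz : s(w, z) ∈ γ := ((fes_adj γ w z).mp h1).1
  by_cases hcase : s(w, z) = e
  · rwa [hcase] at h2
  · exfalso
    have : (fes (γ.erase e)).Adj w z := by
      rw [fes_adj]
      exact ⟨Finset.mem_erase.mpr ⟨hcase, hwz⟩, h1.ne⟩
    exact h4 (h3.trans this.reachable)

/-- injectivity of `phi` on the tree. -/
lemma phi_injOn {G : SimpleGraph V} {γ : Finset (Sym2 V)} (hγ : γ ∈ spanningTrees G)
    (r : V) {e e' : Sym2 V} (he : e ∈ γ) (he' : e' ∈ γ)
    (hphi : phi γ r e = phi γ r e') : e = e' := by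
  have hc := ((mem_spanningTrees_iff G γ).mp hγ).2.1
  obtain ⟨p₀⟩ := hc.preconnected r (phi γ r e)
  have hpath : p₀.bypass.IsPath := SimpleGraph.Walk.bypass_isPath p₀
  have hep : e ∈ p₀.bypass.edges := mem_edges_of_cut hγ he (phi_not_reach hγ he r) _
  have hnr' : ¬ (fes (γ.erase e')).Reachable r (phi γ r e) := by
    rw [hphi]; exact phi_not_reach hγ he' r
  have hep' : e' ∈ p₀.bypass.edges := mem_edges_of_cut hγ he' hnr' _
  have hrev : p₀.bypass.reverse.IsPath := hpath.reverse
  have h1 := firstEdge _ hrev (by rw [SimpleGraph.Walk.edges_reverse]; simpa using hep)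
    (phi_mem γ r e)
  have h2 := firstEdge _ hrev (by rw [SimpleGraph.Walk.edges_reverse]; simpa using hep')
    (by rw [hphi]; exact phi_mem γ r e')
  rw [h1] at h2
  exact Option.some_injective _ h2

end Chunk3

namespace Chunk4

open MyCore Chunk3

lemma mem_edgesWithin {G : SimpleGraph V} {W : Finset V} {e : Sym2 V} :
    e ∈ edgesWithin G W ↔ e ∈ G.edgeFinset ∧ ∀ v ∈ e, v ∈ W := by
  simp [edgesWithin]

/-- a walk in `fes t` with all `t`-edges inside `U` stays in `U` and induces a walk
in `G.induce U`. -/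
lemma reach_induce_of_walk {G : SimpleGraph V} {t : Finset (Sym2 V)} {U : Finset V}
    (hG : t ⊆ G.edgeFinset) (hin : ∀ e ∈ t, ∀ x ∈ e, x ∈ U) :
    ∀ {a b : V} (_ : (fes t).Walk a b) (ha : a ∈ U) (hb : b ∈ U),
      (G.induce (↑U : Set V)).Reachable ⟨a, ha⟩ ⟨b, hb⟩ := by
  intro a b p
  induction p with
  | nil => intro ha hb; rfl
  | @cons a c b h q ih =>
    intro ha hb
    have h' := (fes_adj t a c).mp h
    have hc : c ∈ U := hin _ h'.1 c (by simp)
    have hadj : (G.induce (↑U : Set V)).Adj ⟨a, ha⟩ ⟨c, hc⟩ := by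
      simp only [SimpleGraph.comap_adj, Function.Embedding.coe_subtype]
      exact (G.mem_edgeSet).mp (SimpleGraph.mem_edgeFinset.mp (hG h'.1))
    exact hadj.reachable.trans (ih hc hb)

/-- conversely, reachability in the induced graph gives reachability through
`edgesWithin`. -/
lemma reach_fes_of_induce {G : SimpleGraph V} {U : Finset V} {t : Finset (Sym2 V)}
    (hsup : edgesWithin G U ⊆ t) {x y : (↑U : Set V)}
    (p : (G.induce (↑U : Set V)).Walk x y) : (fes t).Reachable ↑x ↑y := by
  induction p with
  | nil => rfl
  | @cons a c b h q ih =>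
    have hadj : G.Adj ↑a ↑c := by
      simpa only [SimpleGraph.comap_adj, Function.Embedding.coe_subtype] using h
    have hmem : s(↑a, ↑c) ∈ edgesWithin G U := by
      rw [mem_edgesWithin]
      refine ⟨SimpleGraph.mem_edgeFinset.mpr hadj, ?_⟩
      intro v hv
      rcases Sym2.mem_iff.mp hv with rfl | rfl
      · exact a.2
      · exact c.2
    have : (fes t).Adj ↑a ↑c := by
      rw [fes_adj]
      exact ⟨hsup hmem, hadj.ne⟩
    exact this.reachable.trans ih

/-- vertices along a walk admitting an adjacency-closed predicate. -/
lemma walk_support_mem {t : Finset (Sym2 V)} {P : V → Prop}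
    (hP : ∀ a b, P a → (fes t).Adj a b → P b) :
    ∀ {a b : V} (p : (fes t).Walk a b), P a → ∀ v ∈ p.support, P v := by
  intro a b p
  induction p with
  | nil => intro ha v hv; simp at hv; rwa [hv]
  | @cons a c b h q ih =>
    intro ha v hv
    rw [SimpleGraph.Walk.support_cons] at hv
    rcases List.mem_cons.mp hv with rfl | hv
    · exact ha
    · exact ih (hP _ _ ha h) v hv

/-- counting: a subforest of a spanning tree with all edges inside `W'` has at most
`|W'| - 1` edges. -/
lemma card_forest_le {G : SimpleGraph V} {γ : Finset (Sym2 V)} (hγ : γ ∈ spanningTrees G)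
    {s : Finset (Sym2 V)} (hsγ : s ⊆ γ) {W' : Finset V}
    (hwithin : ∀ e ∈ s, ∀ x ∈ e, x ∈ W') {r : V} (hr : r ∈ W') :
    s.card ≤ W'.card - 1 := by
  have h := Finset.card_le_card_of_injOn (phi γ r)
    (t := W'.erase r)
    (fun e hee => by
      refine Finset.mem_erase.mpr ⟨?_, hwithin e hee _ (phi_mem γ r e)⟩
      intro hphir
      have := phi_not_reach hγ (hsγ hee) r
      rw [hphir] at this
      exact this (SimpleGraph.Reachable.refl r))
    (fun e hee e' hee' h => phi_injOn hγ r (hsγ hee) (hsγ hee') h)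
  rwa [Finset.card_erase_of_mem hr] at h

/-- connectivity from surjectivity of `phi`: if every vertex of `W'` other than `r`
is hit by `phi` on `s`, then every vertex of `W'` is reachable from `r` in `fes s`. -/
lemma reach_of_phi_surj {G : SimpleGraph V} {γ : Finset (Sym2 V)} (hγ : γ ∈ spanningTrees G)
    {s : Finset (Sym2 V)} (hsγ : s ⊆ γ) {W' : Finset V}
    (hwithin : ∀ e ∈ s, ∀ x ∈ e, x ∈ W') {r : V}
    (hsurj : ∀ v ∈ W', v ≠ r → ∃ e ∈ s, phi γ r e = v) :
    ∀ v ∈ W', (fes s).Reachable r v := by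
  have hc := ((mem_spanningTrees_iff G γ).mp hγ).2.1
  suffices H : ∀ n : ℕ, ∀ v ∈ W', (fes γ).dist r v ≤ n → (fes s).Reachable r v by
    intro v hv
    exact H ((fes γ).dist r v) v hv le_rfl
  intro n
  induction n with
  | zero =>
    intro v hv hd
    have h0 : (fes γ).dist r v = 0 := Nat.le_zero.mp hd
    rcases SimpleGraph.dist_eq_zero_iff_eq_or_not_reachable.mp h0 with rfl | hnr
    · rfl
    · exact absurd (hc.preconnected r v) hnr
  | succ n ih =>
    intro v hv hd
    by_cases hvr : v = r
    · rw [hvr]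
    obtain ⟨e, hes, hphie⟩ := hsurj v hv hvr
    have heγ : e ∈ γ := hsγ hes
    have hnr : ¬ (fes (γ.erase e)).Reachable r v := by
      rw [← hphie]
      exact phi_not_reach hγ heγ r
    obtain ⟨p₀, hp₀⟩ := hc.exists_walk_length_eq_dist r v
    have hpath : p₀.bypass.IsPath := SimpleGraph.Walk.bypass_isPath p₀
    have hep : e ∈ p₀.bypass.edges := mem_edges_of_cut hγ heγ hnr _
    have hve : v ∈ e := by rw [← hphie]; exact phi_mem γ r e
    obtain ⟨u, hadj, q, hpq, heuv, hlen⟩ := lastEdge p₀.bypass hpath hep hve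
    have hlenle : p₀.bypass.length ≤ (fes γ).dist r v :=
      hp₀ ▸ SimpleGraph.Walk.length_bypass_le p₀
    have hdru : (fes γ).dist r u ≤ q.length := SimpleGraph.dist_le q
    have huW : u ∈ W' := hwithin e hes u (mem_of_eq_pair heuv).1
    have hrecu : (fes s).Reachable r u := by
      apply ih u huW
      omega
    have hstep : (fes s).Adj u v := by
      rw [fes_adj]
      exact ⟨heuv ▸ hes, hadj.ne⟩
    exact hrecu.trans hstep.reachable

end Chunk4

namespace Chunk5

lemma eta_eq_sum_ite (Γ : Finset (Finset (Sym2 V))) (μ : Finset (Sym2 V) → ℝ) (e : Sym2 V) :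
    eta Γ μ e = ∑ γ ∈ Γ, if e ∈ γ then μ γ else 0 := by
  rw [eta, Finset.sum_filter]

lemma eta_nonneg {Γ : Finset (Finset (Sym2 V))} {μ : Finset (Sym2 V) → ℝ}
    (h : ∀ γ, 0 ≤ μ γ) (e : Sym2 V) : 0 ≤ eta Γ μ e :=
  Finset.sum_nonneg fun γ _ => h γ

/-- exchange of summation: summing `eta` over an edge set counts weighted intersections. -/
lemma sum_eta (Γ : Finset (Finset (Sym2 V))) (μ : Finset (Sym2 V) → ℝ) (s : Finset (Sym2 V)) :
    ∑ e ∈ s, eta Γ μ e = ∑ γ ∈ Γ, μ γ * ((γ ∩ s).card : ℝ) := by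
  simp_rw [eta_eq_sum_ite]
  rw [Finset.sum_comm]
  apply Finset.sum_congr rfl
  intro γ _
  rw [Finset.sum_ite_mem s γ (fun _ => μ γ)]
  rw [Finset.sum_const, nsmul_eq_mul, Finset.inter_comm, mul_comm]

end Chunk5

namespace Chunk5b

open Chunk5

lemma sum_restrict {E s : Finset (Sym2 V)} (h : s ⊆ E) (f : Sym2 V → ℝ) :
    ∑ e ∈ E, (if e ∈ s then f e else 0) = ∑ e ∈ s, f e := by
  rw [Finset.sum_ite_mem E s f, Finset.inter_eq_right.mpr h]

lemma card_inter_real {E γ γ' : Finset (Sym2 V)} (h : γ ⊆ E) :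
    ((γ ∩ γ').card : ℝ) = ∑ e ∈ E, (if e ∈ γ then (1:ℝ) else 0) * (if e ∈ γ' then 1 else 0) := by
  have : ∀ e : Sym2 V, (if e ∈ γ then (1:ℝ) else 0) * (if e ∈ γ' then 1 else 0)
      = if e ∈ γ then (if e ∈ γ' then (1:ℝ) else 0) else 0 := by
    intro e
    by_cases h1 : e ∈ γ <;> by_cases h2 : e ∈ γ' <;> simp [h1, h2]
  simp_rw [this]
  rw [sum_restrict h, Finset.sum_ite_mem γ γ' (fun _ => (1:ℝ)), Finset.sum_const,
    nsmul_eq_mul, mul_one]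

lemma EO_eq {Γ : Finset (Finset (Sym2 V))} {E : Finset (Sym2 V)} (hΓ : ∀ γ ∈ Γ, γ ⊆ E)
    (μ : Finset (Sym2 V) → ℝ) : EO Γ μ = ∑ e ∈ E, (eta Γ μ e) ^ 2 := by
  have key : ∀ γ ∈ Γ, ∀ γ' ∈ Γ, ((γ ∩ γ').card : ℝ) * μ γ * μ γ'
      = ∑ e ∈ E, (if e ∈ γ then μ γ else 0) * (if e ∈ γ' then μ γ' else 0) := by
    intro γ hγ γ' _
    rw [card_inter_real (hΓ γ hγ), Finset.sum_mul, Finset.sum_mul]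
    apply Finset.sum_congr rfl
    intro e _
    by_cases h1 : e ∈ γ <;> by_cases h2 : e ∈ γ' <;> simp [h1, h2]
  rw [EO]
  rw [Finset.sum_congr rfl fun γ hγ => Finset.sum_congr rfl fun γ' hγ' => key γ hγ γ' hγ']
  rw [Finset.sum_congr rfl fun γ (_ : γ ∈ Γ) => Finset.sum_comm (s := Γ) (t := E)
    (f := fun γ' e => (if e ∈ γ then μ γ else 0) * (if e ∈ γ' then μ γ' else 0))]
  rw [Finset.sum_comm (s := Γ) (t := E)]
  apply Finset.sum_congr rfl
  intro e _
  rw [pow_two, eta_eq_sum_ite, Finset.sum_mul_sum]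

lemma EO_nonneg {Γ : Finset (Finset (Sym2 V))} {μ : Finset (Sym2 V) → ℝ}
    (hpmf : IsPmf Γ μ) : 0 ≤ EO Γ μ := by
  apply Finset.sum_nonneg
  intro γ _
  apply Finset.sum_nonneg
  intro γ' _
  have := hpmf.1 γ
  have := hpmf.1 γ'
  positivity

lemma MEO_le {Γ : Finset (Finset (Sym2 V))} {μ : Finset (Sym2 V) → ℝ}
    (hpmf : IsPmf Γ μ) : MEO Γ ≤ EO Γ μ := by
  apply csInf_le
  · refine ⟨0, fun y hy => ?_⟩
    obtain ⟨ν, hν, rfl⟩ := hy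
    exact EO_nonneg hν
  · exact ⟨μ, hpmf, rfl⟩

lemma eta_add (Γ : Finset (Finset (Sym2 V))) (μ ν : Finset (Sym2 V) → ℝ) (e : Sym2 V) :
    eta Γ (fun γ => μ γ + ν γ) e = eta Γ μ e + eta Γ ν e := by
  simp [eta, Finset.sum_add_distrib]

lemma eta_smul (Γ : Finset (Finset (Sym2 V))) (c : ℝ) (μ : Finset (Sym2 V) → ℝ) (e : Sym2 V) :
    eta Γ (fun γ => c * μ γ) e = c * eta Γ μ e := by
  simp [eta, Finset.mul_sum]

lemma eta_single {Γ : Finset (Finset (Sym2 V))} {γ1 : Finset (Sym2 V)} (h1 : γ1 ∈ Γ)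
    (c : ℝ) (e : Sym2 V) :
    eta Γ (fun γ => if γ = γ1 then c else 0) e = if e ∈ γ1 then c else 0 := by
  rw [eta_eq_sum_ite]
  have : ∀ γ ∈ Γ, (if e ∈ γ then (if γ = γ1 then c else 0) else 0)
      = if γ = γ1 then (if e ∈ γ1 then c else 0) else 0 := by
    intro γ _
    by_cases hg : γ = γ1
    · subst hg; simp
    · simp [hg]
  rw [Finset.sum_congr rfl this, Finset.sum_ite_eq' Γ γ1, if_pos h1]

/-- The key variational inequality: a tree in the support of an optimal pmf minimizes
the total edge usage. -/
lemma support_min {Γ : Finset (Finset (Sym2 V))} {E : Finset (Sym2 V)}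
    (hΓ : ∀ γ ∈ Γ, γ ⊆ E) {μ : Finset (Sym2 V) → ℝ}
    (hpmf : IsPmf Γ μ) (hopt : EO Γ μ = MEO Γ) {γ0 γ1 : Finset (Sym2 V)}
    (h0 : γ0 ∈ Γ) (h1 : γ1 ∈ Γ) (hpos : 0 < μ γ0) :
    ∑ e ∈ γ0, eta Γ μ e ≤ ∑ e ∈ γ1, eta Γ μ e := by
  by_cases heq : γ0 = γ1
  · rw [heq]
  set D : Sym2 V → ℝ := fun e => (if e ∈ γ1 then (1:ℝ) else 0) - (if e ∈ γ0 then 1 else 0)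
    with hD
  set A : ℝ := ∑ e ∈ γ1, eta Γ μ e - ∑ e ∈ γ0, eta Γ μ e with hA
  set Bq : ℝ := ∑ e ∈ E, (D e) ^ 2 with hBq
  -- the perturbed pmf
  have hpmft : ∀ t : ℝ, 0 ≤ t → t ≤ μ γ0 →
      IsPmf Γ (fun γ => μ γ + t * ((if γ = γ1 then 1 else 0) - (if γ = γ0 then 1 else 0))) := by
    intro t ht0 htT
    refine ⟨?_, ?_, ?_⟩
    · intro γ
      by_cases hg1 : γ = γ1
      · subst hg1
        have hne : γ ≠ γ0 := fun h => heq h.symm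
        simp only [if_pos rfl, if_neg hne, if_true]
        have := hpmf.1 γ
        linarith
      · by_cases hg0 : γ = γ0
        · subst hg0
          simp only [if_neg hg1, if_true]
          linarith
        · simp only [if_neg hg1, if_neg hg0]
          have := hpmf.1 γ
          linarith
    · intro γ hγ
      have hng1 : γ ≠ γ1 := fun h => hγ (h ▸ h1)
      have hng0 : γ ≠ γ0 := fun h => hγ (h ▸ h0)
      simp [hng1, hng0, hpmf.2.1 γ hγ]
    · rw [Finset.sum_add_distrib]
      have hsum1 : ∑ γ ∈ Γ, (if γ = γ1 then (1:ℝ) else 0) = 1 := by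
        rw [Finset.sum_ite_eq' Γ γ1, if_pos h1]
      have hsum0 : ∑ γ ∈ Γ, (if γ = γ0 then (1:ℝ) else 0) = 1 := by
        rw [Finset.sum_ite_eq' Γ γ0, if_pos h0]
      have : ∑ γ ∈ Γ, t * ((if γ = γ1 then (1:ℝ) else 0) - (if γ = γ0 then 1 else 0))
          = t * (∑ γ ∈ Γ, (if γ = γ1 then (1:ℝ) else 0)
            - ∑ γ ∈ Γ, (if γ = γ0 then (1:ℝ) else 0)) := by
        rw [← Finset.mul_sum, Finset.sum_sub_distrib]
      rw [this, hsum1, hsum0, hpmf.2.2]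
      ring
  -- expansion of the perturbed overlap
  have hexp : ∀ t : ℝ,
      EO Γ (fun γ => μ γ + t * ((if γ = γ1 then 1 else 0) - (if γ = γ0 then 1 else 0)))
        = EO Γ μ + 2 * t * A + t ^ 2 * Bq := by
    intro t
    rw [EO_eq hΓ]
    have hetat : ∀ e : Sym2 V,
        eta Γ (fun γ => μ γ + t * ((if γ = γ1 then 1 else 0) - (if γ = γ0 then 1 else 0))) e
          = eta Γ μ e + t * D e := by
      intro e
      rw [eta_add Γ μ _ e]
      congr 1
      have : (fun γ => t * ((if γ = γ1 then (1:ℝ) else 0) - (if γ = γ0 then 1 else 0)))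
          = fun γ => (t * (if γ = γ1 then (1:ℝ) else 0)) + (-t) * (if γ = γ0 then 1 else 0) := by
        funext γ; ring
      rw [this]
      rw [eta_add]
      have e1 : eta Γ (fun γ => t * (if γ = γ1 then (1:ℝ) else 0)) e
          = t * (if e ∈ γ1 then (1:ℝ) else 0) := by
        rw [eta_smul, eta_single h1]
      have e0 : eta Γ (fun γ => (-t) * (if γ = γ0 then (1:ℝ) else 0)) e
          = (-t) * (if e ∈ γ0 then (1:ℝ) else 0) := by
        rw [eta_smul, eta_single h0]
      rw [e1, e0]
      simp only [hD]
      ring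
    simp_rw [hetat]
    have hsq : ∀ e : Sym2 V, (eta Γ μ e + t * D e) ^ 2
        = (eta Γ μ e) ^ 2 + (2 * t) * (eta Γ μ e * D e) + t ^ 2 * (D e) ^ 2 := by
      intro e; ring
    simp_rw [hsq]
    rw [Finset.sum_add_distrib, Finset.sum_add_distrib, ← Finset.mul_sum, ← Finset.mul_sum,
      ← EO_eq hΓ, ← hBq]
    have hsumA : ∑ e ∈ E, eta Γ μ e * D e = A := by
      have h' : ∑ e ∈ E, eta Γ μ e * D e
          = ∑ e ∈ E, ((if e ∈ γ1 then eta Γ μ e else 0) - (if e ∈ γ0 then eta Γ μ e else 0)) := by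
        apply Finset.sum_congr rfl
        intro e _
        by_cases h1e : e ∈ γ1 <;> by_cases h0e : e ∈ γ0 <;> simp [hD, h1e, h0e]
      rw [h', Finset.sum_sub_distrib, sum_restrict (hΓ γ1 h1), sum_restrict (hΓ γ0 h0), hA]
    rw [hsumA]
  -- the inequality for all admissible t
  have hineq : ∀ t : ℝ, 0 < t → t ≤ μ γ0 → 0 ≤ 2 * t * A + t ^ 2 * Bq := by
    intro t ht0 htT
    have h1' := MEO_le (hpmft t ht0.le htT)
    rw [hexp t, ← hopt] at h1'
    linarith
  -- conclude 0 ≤ A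
  rw [hA] at *
  by_contra hAneg
  push_neg at hAneg
  have hAneg' : ∑ e ∈ γ1, eta Γ μ e - ∑ e ∈ γ0, eta Γ μ e < 0 := by linarith
  rcases le_or_gt Bq 0 with hB | hB
  · have := hineq (μ γ0) hpos le_rfl
    nlinarith
  · set t := min (μ γ0) (-(∑ e ∈ γ1, eta Γ μ e - ∑ e ∈ γ0, eta Γ μ e) / Bq) with htdef
    have ht0 : 0 < t := by
      apply lt_min hpos
      apply div_pos (by linarith) hB
    have htT : t ≤ μ γ0 := min_le_left _ _
    have htB : t * Bq ≤ -(∑ e ∈ γ1, eta Γ μ e - ∑ e ∈ γ0, eta Γ μ e) := by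
      have := min_le_right (μ γ0) (-(∑ e ∈ γ1, eta Γ μ e - ∑ e ∈ γ0, eta Γ μ e) / Bq)
      calc t * Bq ≤ (-(∑ e ∈ γ1, eta Γ μ e - ∑ e ∈ γ0, eta Γ μ e) / Bq) * Bq :=
            mul_le_mul_of_nonneg_right this hB.le
        _ = -(∑ e ∈ γ1, eta Γ μ e - ∑ e ∈ γ0, eta Γ μ e) := by
            field_simp
    have := hineq t ht0 htT
    nlinarith
  
end Chunk5b

namespace Chunk6

open Chunk5 Chunk5b

/-- the extension of a weight vector on `Γ` to all finsets. -/
def ext (Γ : Finset (Finset (Sym2 V))) (x : ↥Γ → ℝ) : Finset (Sym2 V) → ℝ :=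
  fun γ => if h : γ ∈ Γ then x ⟨γ, h⟩ else 0

lemma EO_ext_eq (Γ : Finset (Finset (Sym2 V))) (x : ↥Γ → ℝ) :
    EO Γ (ext Γ x) = ∑ γ ∈ Γ.attach, ∑ γ' ∈ Γ.attach,
      (((γ : Finset (Sym2 V)) ∩ (γ' : Finset (Sym2 V))).card : ℝ) * x γ * x γ' := by
  rw [EO, ← Finset.sum_attach Γ
    (fun γ => ∑ γ' ∈ Γ, ((γ ∩ γ').card : ℝ) * ext Γ x γ * ext Γ x γ')]
  apply Finset.sum_congr rfl
  intro γ _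
  rw [← Finset.sum_attach Γ
    (fun γ' => (((γ : Finset (Sym2 V)) ∩ γ').card : ℝ) * ext Γ x ↑γ * ext Γ x γ')]
  apply Finset.sum_congr rfl
  intro γ' _
  simp only [ext]
  rw [dif_pos γ.2, dif_pos γ'.2]

lemma sum_ext (Γ : Finset (Finset (Sym2 V))) (x : ↥Γ → ℝ) :
    ∑ γ ∈ Γ, ext Γ x γ = ∑ i, x i := by
  rw [← Finset.sum_coe_sort Γ (ext Γ x)]
  apply Finset.sum_congr rfl
  intro i _
  rw [ext]
  rw [dif_pos i.2]

lemma exists_optimal (Γ : Finset (Finset (Sym2 V))) (hne : Γ.Nonempty) :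
    ∃ μ, IsPmf Γ μ ∧ EO Γ μ = MEO Γ := by
  classical
  set K : Set (↥Γ → ℝ) := {x | (∀ i, 0 ≤ x i) ∧ ∑ i, x i = 1} with hK
  have hKsplit : K = {x : ↥Γ → ℝ | ∀ i, 0 ≤ x i} ∩ {x : ↥Γ → ℝ | ∑ i, x i = 1} := by
    ext x; simp [hK, Set.mem_setOf_eq, Set.mem_inter_iff]
  have hclosed : IsClosed K := by
    rw [hKsplit]
    apply IsClosed.inter
    · have : {x : ↥Γ → ℝ | ∀ i, 0 ≤ x i} = ⋂ i, {x : ↥Γ → ℝ | 0 ≤ x i} := by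
        ext x; simp
      rw [this]
      exact isClosed_iInter fun i => isClosed_le continuous_const (continuous_apply i)
    · exact isClosed_eq (continuous_finset_sum _ fun i _ => continuous_apply i) continuous_const
  have hKco : IsCompact K := by
    apply IsCompact.of_isClosed_subset (isCompact_univ_pi fun _ : ↥Γ => isCompact_Icc
      (a := (0:ℝ)) (b := 1)) hclosed
    intro x hx
    intro i _
    refine ⟨hx.1 i, ?_⟩
    have h2 : x i ≤ ∑ j, x j :=
      Finset.single_le_sum (fun j _ => hx.1 j) (Finset.mem_univ i)
    rw [hx.2] at h2
    exact h2
  have hg : Continuous fun x : ↥Γ → ℝ => EO Γ (ext Γ x) := by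
    have : (fun x : ↥Γ → ℝ => EO Γ (ext Γ x)) = fun x => ∑ γ ∈ Γ.attach, ∑ γ' ∈ Γ.attach,
        (((γ : Finset (Sym2 V)) ∩ (γ' : Finset (Sym2 V))).card : ℝ) * x γ * x γ' :=
      funext (EO_ext_eq Γ)
    rw [this]
    apply continuous_finset_sum
    intro γ _
    apply continuous_finset_sum
    intro γ' _
    exact (continuous_const.mul (continuous_apply γ)).mul (continuous_apply γ')
  have hpmf_ext : ∀ x ∈ K, IsPmf Γ (ext Γ x) := by
    intro x hx
    refine ⟨?_, ?_, ?_⟩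
    · intro γ
      rw [ext]
      split
      · exact hx.1 _
      · exact le_rfl
    · intro γ hγ
      rw [ext, dif_neg hγ]
    · rw [sum_ext, hx.2]
  have himg : {x : ℝ | ∃ μ, IsPmf Γ μ ∧ x = EO Γ μ} = (fun x => EO Γ (ext Γ x)) '' K := by
    ext y
    constructor
    · rintro ⟨μ, hμ, rfl⟩
      refine ⟨fun i => μ ↑i, ⟨fun i => hμ.1 _, ?_⟩, ?_⟩
      · rw [Finset.sum_coe_sort Γ μ]
        exact hμ.2.2
      · apply Finset.sum_congr rfl
        intro γ hγ
        apply Finset.sum_congr rfl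
        intro γ' hγ'
        simp only [ext]
        rw [dif_pos hγ, dif_pos hγ']
    · rintro ⟨x, hx, rfl⟩
      exact ⟨ext Γ x, hpmf_ext x hx, rfl⟩
  have hKne : K.Nonempty := by
    refine ⟨fun _ => (Γ.card : ℝ)⁻¹, fun i => by positivity, ?_⟩
    rw [Finset.sum_const, Finset.card_univ, Fintype.card_coe, nsmul_eq_mul]
    rw [mul_inv_cancel₀]
    exact_mod_cast Finset.card_ne_zero_of_mem hne.choose_spec
  have hSco : IsCompact ((fun x => EO Γ (ext Γ x)) '' K) := hKco.image hg
  have hSne : ((fun x => EO Γ (ext Γ x)) '' K).Nonempty := hKne.image _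
  have hmem := hSco.sInf_mem hSne
  rw [MEO, himg]
  obtain ⟨x, hxK, hxe⟩ := hmem
  exact ⟨ext Γ x, hpmf_ext x hxK, hxe⟩

end Chunk6

namespace Chunk7

open MyCore Chunk3 Chunk4 Chunk5 Chunk5b

lemma edges_mem_of_walk {γ : Finset (Sym2 V)} (hnd : ∀ e ∈ γ, ¬e.IsDiag) {x y : V}
    (p : (fes γ).Walk x y) {e : Sym2 V} (he : e ∈ p.edges) : e ∈ γ := by
  have := p.edges_subset_edgeSet he
  rwa [edgeSet_fes hnd, Finset.mem_coe] at this

/-- a path in a spanning tree separates its endpoints at each of its edges. -/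
lemma pathSep {G : SimpleGraph V} {γ : Finset (Sym2 V)} (hγ : γ ∈ spanningTrees G) :
    ∀ {x y : V} (p : (fes γ).Walk x y), p.IsPath → ∀ {e : Sym2 V}, e ∈ p.edges →
      ¬ (fes (γ.erase e)).Reachable x y := by
  have hnd : ∀ e ∈ γ, ¬e.IsDiag := fun e hee =>
    G.not_isDiag_of_mem_edgeSet (((mem_spanningTrees_iff G γ).mp hγ).1 hee)
  intro x y p
  induction p with
  | nil => intro _ e he; simp at he
  | @cons x w y h q ih =>
    intro hp e he
    have hq : q.IsPath := hp.of_cons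
    have hnodup := hp.isTrail.edges_nodup
    rw [SimpleGraph.Walk.edges_cons] at hnodup he
    rcases List.mem_cons.mp he with rfl | heq
    · -- e is the first edge
      intro hr
      have hxw : s(x, w) ∈ γ := edges_mem_of_walk hnd (SimpleGraph.Walk.cons h q)
        (by rw [SimpleGraph.Walk.edges_cons]; exact List.mem_cons_self)
      have hqe : s(x, w) ∉ q.edges := by
        intro hmem
        have : x ∈ q.support := SimpleGraph.Walk.fst_mem_support_of_mem_edges q hmem
        exact (SimpleGraph.Walk.cons_isPath_iff h q |>.mp hp).2 this
      have hq' : ∀ e' ∈ q.edges, e' ∈ (fes (γ.erase s(x, w))).edgeSet := by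
        intro e' he'
        have he'γ : e' ∈ γ := edges_mem_of_walk hnd q he'
        have hne : e' ≠ s(x, w) := fun hh => hqe (hh ▸ he')
        rw [edgeSet_fes (fun e hee => hnd e (Finset.mem_of_mem_erase hee))]
        exact Finset.mem_coe.mpr (Finset.mem_erase.mpr ⟨hne, he'γ⟩)
      have hwy : (fes (γ.erase s(x, w))).Reachable w y :=
        (q.transfer _ hq').reachable
      exact not_reach_erase hγ rfl hxw (hr.trans hwy.symm)
    · -- e is inside the tail
      have hih := ih hq heq
      have hne : s(x, w) ≠ e := by
        intro hh
        rw [hh] at hnodup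
        exact (List.nodup_cons.mp hnodup).1 heq
      have hxw : s(x, w) ∈ γ := edges_mem_of_walk hnd (SimpleGraph.Walk.cons h q)
        (by rw [SimpleGraph.Walk.edges_cons]; exact List.mem_cons_self)
      have hadj : (fes (γ.erase e)).Adj x w := by
        rw [fes_adj]
        exact ⟨Finset.mem_erase.mpr ⟨hne, hxw⟩, ((fes_adj γ x w).mp h).2⟩
      intro hr
      exact hih (hadj.symm.reachable.trans hr)

/-- walks transfer into the induced subgraph of the same edge-set graph. -/
lemma reach_induce_self {t : Finset (Sym2 V)} {U : Finset V}
    (hin : ∀ e ∈ t, ∀ x ∈ e, x ∈ U) :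
    ∀ {a b : V} (_ : (fes t).Walk a b) (ha : a ∈ U) (hb : b ∈ U),
      ((fes t).induce (↑U : Set V)).Reachable ⟨a, ha⟩ ⟨b, hb⟩ := by
  intro a b p
  induction p with
  | nil => intro ha hb; rfl
  | @cons a c b h q ih =>
    intro ha hb
    have h' := (fes_adj t a c).mp h
    have hc : c ∈ U := hin _ h'.1 c (by simp)
    have hadj : ((fes t).induce (↑U : Set V)).Adj ⟨a, ha⟩ ⟨c, hc⟩ := by
      simp only [SimpleGraph.comap_adj, Function.Embedding.coe_subtype]
      exact h
    exact hadj.reachable.trans (ih hc hb)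

/-- walks in `fes t` whose support stays in `U` transfer to `G.induce U`. -/
lemma reach_induce_support {G : SimpleGraph V} {t : Finset (Sym2 V)} {U : Finset V}
    (hG : t ⊆ G.edgeFinset) :
    ∀ {a b : V} (p : (fes t).Walk a b) (_ : ∀ v ∈ p.support, v ∈ U)
      (ha : a ∈ U) (hb : b ∈ U),
      (G.induce (↑U : Set V)).Reachable ⟨a, ha⟩ ⟨b, hb⟩ := by
  intro a b p
  induction p with
  | nil => intro _ ha hb; rfl
  | @cons a c b h q ih =>
    intro hsupp ha hb
    have h' := (fes_adj t a c).mp h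
    have hc : c ∈ U := by
      apply hsupp c
      rw [SimpleGraph.Walk.support_cons]
      exact List.mem_cons.mpr (Or.inr q.start_mem_support)
    have hadj : (G.induce (↑U : Set V)).Adj ⟨a, ha⟩ ⟨c, hc⟩ := by
      simp only [SimpleGraph.comap_adj, Function.Embedding.coe_subtype]
      exact (G.mem_edgeSet).mp (SimpleGraph.mem_edgeFinset.mp (hG h'.1))
    refine hadj.reachable.trans (ih ?_ hc hb)
    intro v hv
    exact hsupp v (by rw [SimpleGraph.Walk.support_cons]; exact List.mem_cons.mpr (Or.inr hv))

lemma exists_support_tree {Γ : Finset (Finset (Sym2 V))} {μ : Finset (Sym2 V) → ℝ}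
    (hpmf : IsPmf Γ μ) : ∃ γ0 ∈ Γ, 0 < μ γ0 := by
  by_contra hcon
  push_neg at hcon
  have : ∑ γ ∈ Γ, μ γ = 0 := Finset.sum_eq_zero fun γ hγ =>
    le_antisymm (hcon γ hγ) (hpmf.1 γ)
  rw [hpmf.2.2] at this
  norm_num at this

lemma exists_support_edge {Γ : Finset (Finset (Sym2 V))} {μ : Finset (Sym2 V) → ℝ}
    (hpmf : IsPmf Γ μ) {e : Sym2 V} (h : 0 < eta Γ μ e) :
    ∃ γ ∈ Γ, e ∈ γ ∧ 0 < μ γ := by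
  by_contra hcon
  push_neg at hcon
  have : eta Γ μ e = 0 := by
    rw [eta]
    apply Finset.sum_eq_zero
    intro γ hγ
    rw [Finset.mem_filter] at hγ
    exact le_antisymm (hcon γ hγ.1 hγ.2) (hpmf.1 γ)
  rw [this] at h
  norm_num at h

/-- the swap inequality: if `e` is a tree edge of a support tree, and `s(w,z)` is any
edge of `G` whose endpoints are separated by deleting `e`, then `η e ≤ η s(w,z)`. -/
lemma eta_swap_le {G : SimpleGraph V} {μ : Finset (Sym2 V) → ℝ}
    (hpmf : IsPmf (spanningTrees G) μ)
    (hopt : EO (spanningTrees G) μ = MEO (spanningTrees G))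
    {γ0 : Finset (Sym2 V)} (h0 : γ0 ∈ spanningTrees G) (hpos : 0 < μ γ0)
    {e : Sym2 V} (he : e ∈ γ0) {w z : V} (hfE : s(w, z) ∈ G.edgeFinset)
    (hwz : ¬ (fes (γ0.erase e)).Reachable w z) :
    eta (spanningTrees G) μ e ≤ eta (spanningTrees G) μ s(w, z) := by
  have hmem := (mem_spanningTrees_iff G γ0).mp h0
  have hΓE : ∀ γ ∈ spanningTrees G, γ ⊆ G.edgeFinset := by
    intro γ hγ e' he'
    rw [SimpleGraph.mem_edgeFinset]
    exact ((mem_spanningTrees_iff G γ).mp hγ).1 he'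
  set a := (ep e).1 with ha
  set b := (ep e).2 with hb
  have heab : e = s(a, b) := ep_spec e
  have hfset : s(w, z) ∈ G.edgeSet := SimpleGraph.mem_edgeFinset.mp hfE
  have hc := hmem.2.1
  have hnab : ¬ (fes (γ0.erase e)).Reachable a b := not_reach_erase h0 heab he
  have hwab := reach_endpoint hc heab w
  have hzab := reach_endpoint hc heab z
  -- find the correct orientation and build the swapped tree
  have hswap : ∃ γ1 ∈ spanningTrees G, γ1 = insert s(w, z) (γ0.erase e) := by
    rcases hwab with hwa | hwb
    · rcases hzab with hza | hzb
      · exact absurd (hwa.trans hza.symm) hwz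
      · have hrv : ¬ (fes (γ0.erase s(a, b))).Reachable a z := by
          rw [← heab]
          intro hr
          exact hnab (hr.trans hzb)
        have := swap_mem_spanningTrees h0 (heab ▸ he) hfset
          (by rw [← heab]; exact hwa.symm) hrv
        rw [← heab] at this
        exact ⟨_, this, rfl⟩
    · rcases hzab with hza | hzb
      · have heba : e = s(b, a) := by rw [heab, Sym2.eq_swap]
        have hrv : ¬ (fes (γ0.erase s(b, a))).Reachable b z := by
          rw [← heba]
          intro hr
          exact hnab (hr.trans hza).symm
        have := swap_mem_spanningTrees h0 (heba ▸ he) hfset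
          (by rw [← heba]; exact hwb.symm) hrv
        rw [← heba] at this
        exact ⟨_, this, rfl⟩
      · exact absurd (hwb.trans hzb.symm) hwz
  obtain ⟨γ1, h1, hγ1⟩ := hswap
  have hkey := support_min hΓE hpmf hopt h0 h1 hpos
  have hfne : s(w, z) ∉ γ0.erase e := by
    intro hmem'
    exact hwz ((fes_adj _ w z).mpr ⟨hmem', (G.mem_edgeSet.mp hfset).ne⟩).reachable
  rw [hγ1, Finset.sum_insert hfne] at hkey
  have herase : ∑ e' ∈ γ0.erase e, eta (spanningTrees G) μ e' + eta (spanningTrees G) μ e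
      = ∑ e' ∈ γ0, eta (spanningTrees G) μ e' := Finset.sum_erase_add γ0 _ he
  linarith

end Chunk7

namespace Chunk8

open MyCore Chunk3 Chunk4 Chunk5 Chunk5b Chunk7

set_option maxHeartbeats 1000000 in
lemma core {G : SimpleGraph V} (hG : G.Connected) (hE : G.edgeFinset.Nonempty)
    {W : Finset V} (hW : 2 ≤ W.card)
    (hconn : (G.induce (↑W : Set V)).Connected)
    (hWe : (edgesWithin G W).Nonempty)
    (hmax : ∀ W' : Finset V, (G.induce (↑W' : Set V)).Connected →
      (edgesWithin G W').Nonempty →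
        ((edgesWithin G W').card : ℝ) / ((W'.card : ℝ) - 1) ≤
          ((edgesWithin G W).card : ℝ) / ((W.card : ℝ) - 1))
    {μ : Finset (Sym2 V) → ℝ} (hpmf : IsPmf (spanningTrees G) μ)
    (hopt : EO (spanningTrees G) μ = MEO (spanningTrees G)) :
    (∀ γ0 ∈ spanningTrees G, 0 < μ γ0 → γ0 ∩ edgesWithin G W ∈ spanningTreesOn G W) ∧
    ∃ c : ℝ, ∀ e ∈ edgesWithin G W, eta (spanningTrees G) μ e = c := by
  classical
  set Γ := spanningTrees G with hΓdef
  set η : Sym2 V → ℝ := eta Γ μ with hηdef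
  have hΓE : ∀ γ ∈ Γ, γ ⊆ G.edgeFinset := by
    intro γ hγ e' he'
    rw [SimpleGraph.mem_edgeFinset]
    exact ((mem_spanningTrees_iff G γ).mp hγ).1 he'
  have hnd : ∀ γ ∈ Γ, ∀ e ∈ γ, ¬ e.IsDiag := by
    intro γ hγ e hee
    exact G.not_isDiag_of_mem_edgeSet (SimpleGraph.mem_edgeFinset.mp (hΓE γ hγ hee))
  have hηnn : ∀ e, 0 ≤ η e := fun e => eta_nonneg hpmf.1 e
  -- the minimum usage
  obtain ⟨e₀, he₀E, he₀min⟩ := Finset.exists_min_image G.edgeFinset η hE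
  set t0 := η e₀ with ht0def
  have ht0nn : 0 ≤ t0 := hηnn e₀
  -- the low level set and its component of x₀
  set L := G.edgeFinset.filter (fun e => η e ≤ t0) with hLdef
  have hLE : L ⊆ G.edgeFinset := Finset.filter_subset _ _
  have hLval : ∀ e ∈ L, η e ≤ t0 := fun e hee => (Finset.mem_filter.mp hee).2
  have hLiff : ∀ e, e ∈ G.edgeFinset → η e ≤ t0 → e ∈ L := fun e h1 h2 =>
    Finset.mem_filter.mpr ⟨h1, h2⟩
  have hLnd : ∀ e ∈ L, ¬ e.IsDiag := fun e hee =>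
    G.not_isDiag_of_mem_edgeSet (SimpleGraph.mem_edgeFinset.mp (hLE hee))
  set x₀ := (ep e₀).1 with hx₀def
  set y₀ := (ep e₀).2 with hy₀def
  have he₀xy : e₀ = s(x₀, y₀) := ep_spec e₀
  have hAdj₀ : G.Adj x₀ y₀ := by
    rw [← SimpleGraph.mem_edgeSet, ← he₀xy]
    exact SimpleGraph.mem_edgeFinset.mp he₀E
  have hx₀y₀ : x₀ ≠ y₀ := hAdj₀.ne
  have he₀L : e₀ ∈ L := hLiff e₀ he₀E le_rfl
  set U := Finset.univ.filter (fun v => (fes L).Reachable x₀ v) with hUdef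
  have hUmem : ∀ v, v ∈ U ↔ (fes L).Reachable x₀ v := by
    intro v; simp [hUdef]
  have hx₀U : x₀ ∈ U := (hUmem x₀).mpr (SimpleGraph.Reachable.refl _)
  have hy₀U : y₀ ∈ U := by
    rw [hUmem]
    refine SimpleGraph.Adj.reachable ?_
    rw [fes_adj]
    exact ⟨he₀xy ▸ he₀L, hx₀y₀⟩
  have hUcard : 2 ≤ U.card := by
    rw [show (2:ℕ) = 1 + 1 by rfl]
    rw [Nat.add_one_le_iff]
    exact Finset.one_lt_card.mpr ⟨x₀, hx₀U, y₀, hy₀U, hx₀y₀⟩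
  -- the fundamental step bound
  have hstep : ∀ γ0 ∈ Γ, 0 < μ γ0 → ∀ e' ∈ γ0, ∀ r v : V,
      ¬ (fes (γ0.erase e')).Reachable r v → (fes L).Reachable r v → η e' ≤ t0 := by
    intro γ0 hγ0 hpos e' he' r v hsep hLr
    obtain ⟨p⟩ := hLr
    obtain ⟨w, z, hadj, hedge, hPw, hPz⟩ :=
      exists_cross p ((fes (γ0.erase e')).Reachable r) (SimpleGraph.Reachable.refl r) hsep
    have hfL : s(w, z) ∈ L := ((fes_adj L w z).mp hadj).1
    have hnwz : ¬ (fes (γ0.erase e')).Reachable w z := fun hr => hPz (hPw.trans hr)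
    calc η e' ≤ η s(w, z) := eta_swap_le hpmf hopt hγ0 hpos he' (hLE hfL) hnwz
      _ ≤ t0 := hLval _ hfL
  -- all edges within U sit at the lowest level
  have hwithinU : ∀ e ∈ edgesWithin G U, η e = t0 := by
    intro e hee
    rw [mem_edgesWithin] at hee
    have hmin : t0 ≤ η e := he₀min e hee.1
    rcases eq_or_lt_of_le hmin with heq | hlt
    · exact heq.symm
    · exfalso
      have hpos : 0 < η e := lt_of_le_of_lt ht0nn hlt
      obtain ⟨γ1, hγ1, heγ1, hμ1⟩ := exists_support_edge hpmf hpos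
      have hab := mem_of_eq_pair (ep_spec e)
      have haU : (ep e).1 ∈ U := hee.2 _ hab.1
      have hbU : (ep e).2 ∈ U := hee.2 _ hab.2
      have hreachL : (fes L).Reachable (ep e).1 (ep e).2 :=
        ((hUmem _).mp haU).symm.trans ((hUmem _).mp hbU)
      have hnab : ¬ (fes (γ1.erase e)).Reachable (ep e).1 (ep e).2 :=
        not_reach_erase hγ1 (ep_spec e) heγ1
      have := hstep γ1 hγ1 hμ1 e heγ1 _ _ hnab hreachL
      linarith
  -- surjectivity of phi onto U \ {x₀} for support trees
  have hUsurj : ∀ γ0 ∈ Γ, 0 < μ γ0 → ∀ v ∈ U, v ≠ x₀ →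
      ∃ e ∈ γ0 ∩ edgesWithin G U, phi γ0 x₀ e = v := by
    intro γ0 hγ0 hpos v hvU hvx₀
    have hTc : (fes γ0).Connected := ((mem_spanningTrees_iff G γ0).mp hγ0).2.1
    obtain ⟨p₀⟩ := hTc.preconnected x₀ v
    set p := p₀.bypass with hpdef
    have hpath : p.IsPath := SimpleGraph.Walk.bypass_isPath p₀
    have hsep : ∀ e' ∈ p.edges, ¬ (fes (γ0.erase e')).Reachable x₀ v :=
      fun e' he' => pathSep hγ0 p hpath he'
    have hreachLv : (fes L).Reachable x₀ v := (hUmem v).mp hvU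
    have hedgeγ : ∀ e' ∈ p.edges, e' ∈ γ0 := fun e' he' =>
      edges_mem_of_walk (hnd γ0 hγ0) p he'
    have hedgeL : ∀ e' ∈ p.edges, e' ∈ (fes L).edgeSet := by
      intro e' he'
      rw [edgeSet_fes hLnd, Finset.mem_coe]
      exact hLiff e' (hΓE γ0 hγ0 (hedgeγ e' he')) (hstep γ0 hγ0 hpos e' (hedgeγ e' he')
        x₀ v (hsep e' he') hreachLv)
    have hsupp : ∀ u ∈ p.support, u ∈ U := by
      have := walk_support_mem (t := L) (P := fun u => u ∈ U)
        (fun a b ha hab => (hUmem b).mpr (((hUmem a).mp ha).trans hab.reachable))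
        (p.transfer (fes L) hedgeL) hx₀U
      rwa [SimpleGraph.Walk.support_transfer] at this
    obtain ⟨u, hadj, q', hq'⟩ := SimpleGraph.Walk.exists_eq_cons_of_ne hvx₀ p.reverse
    have hein : s(v, u) ∈ p.edges := by
      have h1 : s(v, u) ∈ p.reverse.edges := by
        rw [hq', SimpleGraph.Walk.edges_cons]
        exact List.mem_cons_self
      rw [SimpleGraph.Walk.edges_reverse] at h1
      exact List.mem_reverse.mp h1
    have heγ0 : s(v, u) ∈ γ0 := hedgeγ _ hein
    have hvsupp : v ∈ p.support := SimpleGraph.Walk.fst_mem_support_of_mem_edges p hein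
    have husupp : u ∈ p.support := SimpleGraph.Walk.snd_mem_support_of_mem_edges p hein
    have hEWU : s(v, u) ∈ edgesWithin G U := by
      rw [mem_edgesWithin]
      refine ⟨hΓE γ0 hγ0 heγ0, ?_⟩
      intro x hx
      rcases Sym2.mem_iff.mp hx with rfl | rfl
      · exact hsupp _ hvsupp
      · exact hsupp _ husupp
    refine ⟨s(v, u), Finset.mem_inter.mpr ⟨heγ0, hEWU⟩, ?_⟩
    exact phi_det hγ0 heγ0 x₀ (by simp) (hsep _ hein)
  -- counting within U
  have hUcount : ∀ γ0 ∈ Γ, 0 < μ γ0 → ((γ0 ∩ edgesWithin G U).card = U.card - 1) := by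
    intro γ0 hγ0 hpos
    have hle : (γ0 ∩ edgesWithin G U).card ≤ U.card - 1 := by
      apply card_forest_le hγ0 Finset.inter_subset_left _ hx₀U
      intro e hee x hx
      exact (mem_edgesWithin.mp (Finset.mem_inter.mp hee).2).2 x hx
    have hge : U.card - 1 ≤ (γ0 ∩ edgesWithin G U).card := by
      have hsurj : Set.SurjOn (phi γ0 x₀) ↑(γ0 ∩ edgesWithin G U) ↑(U.erase x₀) := by
        intro v hv
        rw [Finset.coe_erase, Set.mem_diff] at hv
        obtain ⟨e, hes, hphie⟩ := hUsurj γ0 hγ0 hpos v (Finset.mem_coe.mp hv.1)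
          (by simpa using hv.2)
        exact ⟨e, Finset.mem_coe.mpr hes, hphie⟩
      have := Finset.card_le_card_of_surjOn (phi γ0 x₀) hsurj
      rwa [Finset.card_erase_of_mem hx₀U] at this
    omega
  -- total usage within U
  have hUcast : ((U.card - 1 : ℕ) : ℝ) = (U.card : ℝ) - 1 := by
    rw [Nat.cast_sub (by omega)]
    norm_num
  have hUsum : ∑ e ∈ edgesWithin G U, η e = (U.card : ℝ) - 1 := by
    rw [hηdef, sum_eta]
    have : ∀ γ ∈ Γ, μ γ * (((γ ∩ edgesWithin G U).card : ℕ) : ℝ)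
        = μ γ * ((U.card : ℝ) - 1) := by
      intro γ hγ
      rcases (hpmf.1 γ).eq_or_lt with h0 | h0
      · rw [← h0]; ring
      · rw [hUcount γ hγ h0, hUcast]
    rw [Finset.sum_congr rfl this, ← Finset.sum_mul, hpmf.2.2, one_mul]
  have hEWUne : (edgesWithin G U).Nonempty := by
    refine ⟨e₀, mem_edgesWithin.mpr ⟨he₀E, ?_⟩⟩
    intro x hx
    rw [he₀xy] at hx
    rcases Sym2.mem_iff.mp hx with rfl | rfl
    · exact hx₀U
    · exact hy₀U
  have hUsum' : ∑ e ∈ edgesWithin G U, η e = t0 * ((edgesWithin G U).card : ℝ) := by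
    rw [Finset.sum_congr rfl (fun e hee => hwithinU e hee), Finset.sum_const,
      nsmul_eq_mul, mul_comm]
  -- connectivity of the induced subgraph on U
  have hUconn : (G.induce (↑U : Set V)).Connected := by
    rw [SimpleGraph.connected_iff]
    constructor
    · rintro ⟨xx, hxx⟩ ⟨yy, hyy⟩
      have hxxU : xx ∈ U := Finset.mem_coe.mp hxx
      have hyyU : yy ∈ U := Finset.mem_coe.mp hyy
      have hreach : ∀ zz (hzz : zz ∈ U),
          (G.induce (↑U : Set V)).Reachable ⟨x₀, Finset.mem_coe.mpr hx₀U⟩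
            ⟨zz, Finset.mem_coe.mpr hzz⟩ := by
        intro zz hzz
        obtain ⟨p⟩ := (hUmem zz).mp hzz
        have hsupp := walk_support_mem (t := L) (P := fun u => u ∈ U)
          (fun a b ha hab => (hUmem b).mpr (((hUmem a).mp ha).trans hab.reachable)) p hx₀U
        exact reach_induce_support hLE p hsupp hx₀U hzz
      exact ((hreach xx hxxU).symm.trans (hreach yy hyyU))
    · exact ⟨⟨x₀, Finset.mem_coe.mpr hx₀U⟩⟩
  -- positivity of t0 and the density inequality
  have hUcardR : (1 : ℝ) ≤ (U.card : ℝ) - 1 := by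
    have : (2 : ℝ) ≤ (U.card : ℝ) := by exact_mod_cast hUcard
    linarith
  have hEWUpos : (0 : ℝ) < ((edgesWithin G U).card : ℝ) := by
    have := Finset.card_pos.mpr hEWUne
    exact_mod_cast this
  have ht0pos : 0 < t0 := by
    by_contra h
    push_neg at h
    have ht00 : t0 = 0 := le_antisymm h ht0nn
    rw [hUsum', ht00, zero_mul] at hUsum
    linarith
  have hWcardR : (1 : ℝ) ≤ (W.card : ℝ) - 1 := by
    have : (2 : ℝ) ≤ (W.card : ℝ) := by exact_mod_cast hW
    linarith
  have hEHpos : (0 : ℝ) < ((edgesWithin G W).card : ℝ) := by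
    have := Finset.card_pos.mpr hWe
    exact_mod_cast this
  have hdens := hmax U hUconn hEWUne
  have hkey : (W.card : ℝ) - 1 ≤ t0 * ((edgesWithin G W).card : ℝ) := by
    have h1 : t0 * ((edgesWithin G U).card : ℝ) = (U.card : ℝ) - 1 := by
      rw [← hUsum', hUsum]
    rw [div_le_div_iff₀ (by linarith) (by linarith)] at hdens
    -- hdens : EWU.card * (W.card - 1) ≤ EH.card * (U.card - 1)
    nlinarith
  -- the edge usage on E_H is everywhere the minimum
  have hWsupple : ∀ γ ∈ Γ, ((γ ∩ edgesWithin G W).card : ℝ) ≤ (W.card : ℝ) - 1 := by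
    intro γ hγ
    obtain ⟨r₀, hr₀⟩ := Finset.card_pos.mp (by omega : 0 < W.card)
    have := card_forest_le hγ (Finset.inter_subset_left (s₂ := edgesWithin G W))
      (fun e hee x hx => (mem_edgesWithin.mp (Finset.mem_inter.mp hee).2).2 x hx) hr₀
    calc ((γ ∩ edgesWithin G W).card : ℝ) ≤ ((W.card - 1 : ℕ) : ℝ) := by exact_mod_cast this
      _ = (W.card : ℝ) - 1 := by rw [Nat.cast_sub (by omega)]; norm_num
  have hEHle : ∑ e ∈ edgesWithin G W, η e ≤ (W.card : ℝ) - 1 := by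
    rw [hηdef, sum_eta]
    calc ∑ γ ∈ Γ, μ γ * ((γ ∩ edgesWithin G W).card : ℝ)
        ≤ ∑ γ ∈ Γ, μ γ * ((W.card : ℝ) - 1) := by
          apply Finset.sum_le_sum
          intro γ hγ
          exact mul_le_mul_of_nonneg_left (hWsupple γ hγ) (hpmf.1 γ)
      _ = (W.card : ℝ) - 1 := by rw [← Finset.sum_mul, hpmf.2.2, one_mul]
  have hEHge : t0 * ((edgesWithin G W).card : ℝ) ≤ ∑ e ∈ edgesWithin G W, η e := by
    calc t0 * ((edgesWithin G W).card : ℝ) = ∑ _e ∈ edgesWithin G W, t0 := by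
          rw [Finset.sum_const, nsmul_eq_mul, mul_comm]
      _ ≤ ∑ e ∈ edgesWithin G W, η e := by
          apply Finset.sum_le_sum
          intro e hee
          exact he₀min e (mem_edgesWithin.mp hee).1
  have hEHsum : ∑ e ∈ edgesWithin G W, η e = (W.card : ℝ) - 1 := le_antisymm hEHle
    (le_trans hkey hEHge)
  have hconstW : ∀ e ∈ edgesWithin G W, η e = t0 := by
    have hzero : ∑ e ∈ edgesWithin G W, (η e - t0) = 0 := by
      rw [Finset.sum_sub_distrib, Finset.sum_const, nsmul_eq_mul, hEHsum]
      have : t0 * ((edgesWithin G W).card : ℝ) = (W.card : ℝ) - 1 := by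
        nlinarith [hEHge, hEHsum, hkey]
      linarith [this]
    have hnn : ∀ e ∈ edgesWithin G W, 0 ≤ η e - t0 := by
      intro e hee
      have := he₀min e (mem_edgesWithin.mp hee).1
      linarith
    intro e hee
    have := (Finset.sum_eq_zero_iff_of_nonneg hnn).mp hzero e hee
    linarith
  -- support trees restrict to exactly |W| - 1 edges
  have hWsuppeq : ∀ γ0 ∈ Γ, 0 < μ γ0 → ((γ0 ∩ edgesWithin G W).card : ℝ)
      = (W.card : ℝ) - 1 := by
    have hzero : ∑ γ ∈ Γ, μ γ * (((W.card : ℝ) - 1) - ((γ ∩ edgesWithin G W).card : ℝ)) = 0 := by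
      have h1 : ∑ γ ∈ Γ, μ γ * ((γ ∩ edgesWithin G W).card : ℝ) = (W.card : ℝ) - 1 := by
        rw [← sum_eta, ← hηdef, hEHsum]
      have h2 : ∑ γ ∈ Γ, μ γ * ((W.card : ℝ) - 1) = (W.card : ℝ) - 1 := by
        rw [← Finset.sum_mul, hpmf.2.2, one_mul]
      have h3 : ∀ γ ∈ Γ, μ γ * (((W.card : ℝ) - 1) - ((γ ∩ edgesWithin G W).card : ℝ))
          = μ γ * ((W.card : ℝ) - 1) - μ γ * ((γ ∩ edgesWithin G W).card : ℝ) := by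
        intro γ _; ring
      rw [Finset.sum_congr rfl h3, Finset.sum_sub_distrib, h1, h2]
      ring
    intro γ0 hγ0 hpos
    have hnn : ∀ γ ∈ Γ, 0 ≤ μ γ * (((W.card : ℝ) - 1) - ((γ ∩ edgesWithin G W).card : ℝ)) := by
      intro γ hγ
      apply mul_nonneg (hpmf.1 γ)
      have := hWsupple γ hγ
      linarith
    have := (Finset.sum_eq_zero_iff_of_nonneg hnn).mp hzero γ0 hγ0
    rcases mul_eq_zero.mp this with h | h
    · linarith
    · linarith
  -- assemble the spanning-tree-on-W membership for support trees
  refine ⟨?_, ⟨t0, hconstW⟩⟩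
  intro γ0 hγ0 hpos
  obtain ⟨r₀, hr₀⟩ := Finset.card_pos.mp (by omega : 0 < W.card)
  have hcardℕ : (γ0 ∩ edgesWithin G W).card = W.card - 1 := by
    have := hWsuppeq γ0 hγ0 hpos
    have h2 : ((γ0 ∩ edgesWithin G W).card : ℝ) = ((W.card - 1 : ℕ) : ℝ) := by
      rw [this, Nat.cast_sub (by omega)]; norm_num
    exact_mod_cast h2
  have hwithin : ∀ e ∈ γ0 ∩ edgesWithin G W, ∀ x ∈ e, x ∈ W :=
    fun e hee x hx => (mem_edgesWithin.mp (Finset.mem_inter.mp hee).2).2 x hx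
  have hsurjW : ∀ v ∈ W, v ≠ r₀ → ∃ e ∈ γ0 ∩ edgesWithin G W, phi γ0 r₀ e = v := by
    have hmapsto : ∀ e (he : e ∈ γ0 ∩ edgesWithin G W), phi γ0 r₀ e ∈ W.erase r₀ := by
      intro e hee
      refine Finset.mem_erase.mpr ⟨?_, hwithin e hee _ (phi_mem γ0 r₀ e)⟩
      intro hphir
      have := phi_not_reach hγ0 (Finset.mem_inter.mp hee).1 r₀
      rw [hphir] at this
      exact this (SimpleGraph.Reachable.refl r₀)
    have hinj : ∀ (e₁ e₂ : Sym2 V) (_ : e₁ ∈ γ0 ∩ edgesWithin G W) (_ : e₂ ∈ γ0 ∩ edgesWithin G W), phi γ0 r₀ e₁ = phi γ0 r₀ e₂ → e₁ = e₂ := by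
      intro e₁ e₂ he₁ he₂ h
      exact phi_injOn hγ0 r₀ (Finset.mem_inter.mp he₁).1 (Finset.mem_inter.mp he₂).1 h
    have hcard : (W.erase r₀).card ≤ (γ0 ∩ edgesWithin G W).card := by
      rw [Finset.card_erase_of_mem hr₀, hcardℕ]
    have := Finset.surj_on_of_inj_on_of_card_le (fun e _ => phi γ0 r₀ e) hmapsto hinj hcard
    intro v hv hvne
    obtain ⟨e, hee, hphie⟩ := this v (Finset.mem_erase.mpr ⟨hvne, hv⟩)
    exact ⟨e, hee, hphie.symm⟩
  have hreachW : ∀ v ∈ W, (fes (γ0 ∩ edgesWithin G W)).Reachable r₀ v :=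
    reach_of_phi_surj hγ0 Finset.inter_subset_left hwithin hsurjW
  rw [spanningTreesOn, Finset.mem_filter]
  refine ⟨Finset.mem_univ _, Finset.inter_subset_right, ?_, hcardℕ⟩
  rw [SimpleGraph.connected_iff]
  constructor
  · rintro ⟨xx, hxx⟩ ⟨yy, hyy⟩
    have hxxW : xx ∈ W := Finset.mem_coe.mp hxx
    have hyyW : yy ∈ W := Finset.mem_coe.mp hyy
    have hreach : ∀ zz (hzz : zz ∈ W),
        ((fes (γ0 ∩ edgesWithin G W)).induce (↑W : Set V)).Reachable
          ⟨r₀, Finset.mem_coe.mpr hr₀⟩ ⟨zz, Finset.mem_coe.mpr hzz⟩ := by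
      intro zz hzz
      obtain ⟨p⟩ := hreachW zz hzz
      exact reach_induce_self hwithin p hr₀ hzz
    exact (hreach xx hxxW).symm.trans (hreach yy hyyW)
  · exact ⟨⟨r₀, Finset.mem_coe.mpr hr₀⟩⟩

end Chunk8

open MyCore Chunk3 Chunk4 Chunk5 Chunk5b Chunk6 Chunk7 Chunk8

/-- an induced connected subgraph with at least one edge that
maximizes the denseness `θ(H) = |E_H|/(|V_H| - 1)` is a homogeneous core of
`G`: it is homogeneous and every fair spanning tree of `G` restricts to a
spanning tree of it. -/
theorem densest_subgraph_is_homogeneous_core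
    {V : Type*} [Fintype V] [DecidableEq V]
    (G : SimpleGraph V) (hG : G.Connected) (hE : G.edgeFinset.Nonempty)
    (W : Finset V) (hW : 2 ≤ W.card)
    (hconn : (G.induce (↑W : Set V)).Connected)
    (hWe : (edgesWithin G W).Nonempty)
    (hmax : ∀ W' : Finset V, (G.induce (↑W' : Set V)).Connected →
      (edgesWithin G W').Nonempty →
        ((edgesWithin G W').card : ℝ) / ((W'.card : ℝ) - 1) ≤
          ((edgesWithin G W).card : ℝ) / ((W.card : ℝ) - 1)) :
    (∃ μ, IsPmf (spanningTreesOn G W) μ ∧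
      ∃ c : ℝ, ∀ e ∈ edgesWithin G W, eta (spanningTreesOn G W) μ e = c) ∧
    (∀ γ, IsFair G γ → γ ∩ edgesWithin G W ∈ spanningTreesOn G W) := by
  classical
  set Γ := spanningTrees G with hΓdef
  set ΓW := spanningTreesOn G W with hΓWdef
  set EH := edgesWithin G W with hEHdef
  -- part 2
  have part2 : ∀ γ, IsFair G γ → γ ∩ EH ∈ ΓW := by
    rintro γ ⟨μ, hpmf, hopt, hpos⟩
    have hγΓ : γ ∈ Γ := by
      by_contra hnot
      rw [hpmf.2.1 γ hnot] at hpos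
      norm_num at hpos
    exact (core hG hE hW hconn hWe hmax hpmf hopt).1 γ hγΓ hpos
  refine ⟨?_, part2⟩
  -- existence of an optimal pmf
  have hfes : fes G.edgeFinset = G := by
    rw [fes, SimpleGraph.coe_edgeFinset, SimpleGraph.fromEdgeSet_edgeSet]
  have hsub : (↑G.edgeFinset : Set (Sym2 V)) ⊆ G.edgeSet := by
    rw [SimpleGraph.coe_edgeFinset]
  have hc2 : (fes G.edgeFinset).Connected := by rw [hfes]; exact hG
  obtain ⟨t, -, htΓ⟩ := exists_spanningTree_subset G hsub hc2
  obtain ⟨μ, hpmf, hopt⟩ := exists_optimal Γ ⟨t, htΓ⟩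
  obtain ⟨hrestrict, c, hconst⟩ := core hG hE hW hconn hWe hmax hpmf hopt
  have hsupp0 : ∀ γ ∈ Γ, γ ∩ EH ∉ ΓW → μ γ = 0 := by
    intro γ hγ hno
    rcases (hpmf.1 γ).eq_or_lt with h | h
    · exact h.symm
    · exact absurd (hrestrict γ hγ h) hno
  set ν : Finset (Sym2 V) → ℝ :=
    fun β => ∑ γ ∈ Γ.filter (fun γ' => γ' ∩ EH = β), μ γ with hνdef
  have hνpmf : IsPmf ΓW ν := by
    refine ⟨?_, ?_, ?_⟩
    · intro β
      exact Finset.sum_nonneg fun γ _ => hpmf.1 γ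
    · intro β hβ
      apply Finset.sum_eq_zero
      intro γ hγ
      rw [Finset.mem_filter] at hγ
      exact hsupp0 γ hγ.1 (hγ.2 ▸ hβ)
    · have hfib := Finset.sum_fiberwise_of_maps_to
        (s := Γ.filter (fun γ => γ ∩ EH ∈ ΓW)) (t := ΓW) (g := fun γ => γ ∩ EH)
        (fun γ hγ => (Finset.mem_filter.mp hγ).2) μ
      have hinner : ∀ β ∈ ΓW,
          (Γ.filter (fun γ => γ ∩ EH ∈ ΓW)).filter (fun γ => γ ∩ EH = β)
            = Γ.filter (fun γ' => γ' ∩ EH = β) := by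
        intro β hβ
        ext γ
        simp only [Finset.mem_filter]
        constructor
        · rintro ⟨⟨h1, _⟩, h3⟩
          exact ⟨h1, h3⟩
        · rintro ⟨h1, h3⟩
          exact ⟨⟨h1, h3 ▸ hβ⟩, h3⟩
      calc ∑ β ∈ ΓW, ν β
          = ∑ β ∈ ΓW, ∑ γ ∈ (Γ.filter (fun γ => γ ∩ EH ∈ ΓW)).filter
              (fun γ => γ ∩ EH = β), μ γ := by
            apply Finset.sum_congr rfl
            intro β hβ
            rw [hνdef, hinner β hβ]
        _ = ∑ γ ∈ Γ.filter (fun γ => γ ∩ EH ∈ ΓW), μ γ := hfib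
        _ = ∑ γ ∈ Γ, μ γ := by
            apply Finset.sum_subset (Finset.filter_subset _ _)
            intro γ hγ hno
            apply hsupp0 γ hγ
            intro hmem
            exact hno (Finset.mem_filter.mpr ⟨hγ, hmem⟩)
        _ = 1 := hpmf.2.2
  refine ⟨ν, hνpmf, c, ?_⟩
  intro e he
  have heta : eta ΓW ν e = eta Γ μ e := by
    have hfib := Finset.sum_fiberwise_of_maps_to
      (s := Γ.filter (fun γ => γ ∩ EH ∈ ΓW ∧ e ∈ γ)) (t := ΓW.filter (fun β => e ∈ β))
      (g := fun γ => γ ∩ EH)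
      (fun γ hγ => by
        rw [Finset.mem_filter] at hγ ⊢
        exact ⟨hγ.2.1, Finset.mem_inter.mpr ⟨hγ.2.2, he⟩⟩) μ
    have hinner : ∀ β ∈ ΓW.filter (fun β => e ∈ β),
        (Γ.filter (fun γ => γ ∩ EH ∈ ΓW ∧ e ∈ γ)).filter (fun γ => γ ∩ EH = β)
          = Γ.filter (fun γ' => γ' ∩ EH = β) := by
      intro β hβ
      rw [Finset.mem_filter] at hβ
      ext γ
      simp only [Finset.mem_filter]
      constructor
      · rintro ⟨⟨h1, _⟩, h3⟩
        exact ⟨h1, h3⟩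
      · rintro ⟨h1, h3⟩
        refine ⟨⟨h1, h3 ▸ hβ.1, ?_⟩, h3⟩
        have : e ∈ γ ∩ EH := h3 ▸ hβ.2
        exact (Finset.mem_inter.mp this).1
    calc eta ΓW ν e
        = ∑ β ∈ ΓW.filter (fun β => e ∈ β),
            ∑ γ ∈ (Γ.filter (fun γ => γ ∩ EH ∈ ΓW ∧ e ∈ γ)).filter
              (fun γ => γ ∩ EH = β), μ γ := by
          rw [eta]
          apply Finset.sum_congr rfl
          intro β hβ
          rw [hνdef, hinner β hβ]
      _ = ∑ γ ∈ Γ.filter (fun γ => γ ∩ EH ∈ ΓW ∧ e ∈ γ), μ γ := hfib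
      _ = ∑ γ ∈ Γ.filter (fun γ => e ∈ γ), μ γ := by
          apply Finset.sum_subset
          · intro γ hγ
            rw [Finset.mem_filter] at hγ ⊢
            exact ⟨hγ.1, hγ.2.2⟩
          · intro γ hγ hno
            rw [Finset.mem_filter] at hγ
            apply hsupp0 γ hγ.1
            intro hmem
            exact hno (Finset.mem_filter.mpr ⟨hγ.1, hmem, hγ.2⟩)
      _ = eta Γ μ e := by rw [eta]
  rw [heta]
  exact hconst e he
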